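/- For an LPAD T, the collection Ω_T = {ω_K : K a finite set of finite composite choices} is an algebra of subsets of the set W_T of worlds of T: it contains W_T itself and is closed under complementation and finite unions (hence under finite intersections). -/

import Mathlib

namespace DistSem

/-! ### First-order syntax

Terms over a type `F` of function symbols (constants are 0-ary applications),
atoms over a type `P` of predicate symbols.  A language with a finite number of
function and constant symbols is modelled by a `[Finite F]` hypothesis (and
finitely many predicates by `[Finite P]`). -/

inductive FOTerm (F : Type) : Type
  | var : ℕ → FOTerm F
  | app : F → List (FOTerm F) → FOTerm F

namespace FOTerm

variable {F : Type}

/-- The size of a term. -/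
noncomputable def size (t : FOTerm F) : ℕ := sizeOf t

/-- `HasVar t n` holds iff the variable `n` occurs in `t`. -/
inductive HasVar : FOTerm F → ℕ → Prop
  | var (n : ℕ) : HasVar (.var n) n
  | app {f : F} {args : List (FOTerm F)} {t : FOTerm F} {n : ℕ} :
      t ∈ args → HasVar t n → HasVar (.app f args) n

/-- A term is ground if it contains no variables. -/
inductive Ground : FOTerm F → Prop
  | app {f : F} {args : List (FOTerm F)} : (∀ t ∈ args, Ground t) → Ground (.app f args)

/-- Applying a substitution (an assignment of terms to variables) to a term. -/
def subst (θ : ℕ → FOTerm F) : FOTerm F → FOTerm F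
  | .var n => θ n
  | .app f args => .app f (args.attach.map fun t => subst θ t.1)
decreasing_by
  have := List.sizeOf_lt_of_mem t.2
  simp only [FOTerm.app.sizeOf_spec]
  omega

end FOTerm

/-- A logical atom: a predicate symbol applied to a list of terms. -/
structure FOAtom (F P : Type) : Type where
  pred : P
  args : List (FOTerm F)

namespace FOAtom

variable {F P : Type}

def subst (θ : ℕ → FOTerm F) (A : FOAtom F P) : FOAtom F P :=
  ⟨A.pred, A.args.map (FOTerm.subst θ)⟩

def Ground (A : FOAtom F P) : Prop := ∀ t ∈ A.args, t.Ground

def HasVar (A : FOAtom F P) (n : ℕ) : Prop := ∃ t ∈ A.args, t.HasVar n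

/-- `A` is a ground instance of the (possibly non-ground) atom `Q`. -/
def InstanceOf (Q A : FOAtom F P) : Prop := A.Ground ∧ (A = Q ∨ ∃ θ, A = Q.subst θ)

end FOAtom

/-- A literal: an atom or a negated atom. -/
inductive Lit (F P : Type) : Type
  | pos (A : FOAtom F P)
  | neg (A : FOAtom F P)

namespace Lit

variable {F P : Type}

def subst (θ : ℕ → FOTerm F) : Lit F P → Lit F P
  | pos A => pos (A.subst θ)
  | neg A => neg (A.subst θ)

def Ground : Lit F P → Prop
  | pos A => A.Ground
  | neg A => A.Ground

/-- The atom of a literal. -/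
def atom : Lit F P → FOAtom F P
  | pos A => A
  | neg A => A

def HasVar (l : Lit F P) (n : ℕ) : Prop := l.atom.HasVar n

end Lit

/-- A normal clause `head ← body`. -/
structure Clause (F P : Type) : Type where
  head : FOAtom F P
  body : List (Lit F P)

namespace Clause

variable {F P : Type}

def subst (θ : ℕ → FOTerm F) (C : Clause F P) : Clause F P :=
  ⟨C.head.subst θ, C.body.map (Lit.subst θ)⟩

def Ground (C : Clause F P) : Prop := C.head.Ground ∧ ∀ L ∈ C.body, L.Ground

def HasVar (C : Clause F P) (n : ℕ) : Prop :=
  C.head.HasVar n ∨ ∃ L ∈ C.body, L.HasVar n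

/-- `Cg` is a ground instance of the clause `C`. -/
def Instance (C Cg : Clause F P) : Prop :=
  Cg.Ground ∧ (Cg = C ∨ ∃ θ, Cg = C.subst θ)

end Clause

/-- A normal logic program, viewed as a set of clauses.  (Finiteness of the set of
clauses of a user program is imposed by explicit hypotheses; ground instantiations
and worlds of LPADs are again of this type, but may be infinite.) -/
abbrev NormalProgram (F P : Type) := Set (Clause F P)

variable {F P : Type}

/-- The ground instantiation `ground(P)` of a program. -/
def instancesOf (Pr : NormalProgram F P) : Set (Clause F P) :=
  {Cg | ∃ C ∈ Pr, C.Instance Cg}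

/-! ### Three-valued interpretations and the iterated fixed point characterization
of the well-founded semantics (Przymusinski 1989). -/

/-- A 3-valued interpretation `⟨Tr; Fa⟩`. -/
structure Interp (F P : Type) : Type where
  tr : Set (FOAtom F P)
  fa : Set (FOAtom F P)

/-- A literal is true in `I`, or is a (positive) member of `Tr`. -/
def litTrueIn (I : Interp F P) (Tr : Set (FOAtom F P)) : Lit F P → Prop
  | .pos A => A ∈ I.tr ∨ A ∈ Tr
  | .neg A => A ∈ I.fa

/-- A literal is true in the 3-valued interpretation `I`. -/
def litTrue (I : Interp F P) : Lit F P → Prop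
  | .pos A => A ∈ I.tr
  | .neg A => A ∈ I.fa

/-- A literal is false in `I`, or is a (positive) member of `Fa`. -/
def litFalseIn (I : Interp F P) (Fa : Set (FOAtom F P)) : Lit F P → Prop
  | .pos A => A ∈ I.fa ∨ A ∈ Fa
  | .neg A => A ∈ I.tr

/-- The operator `True^P_I(Tr)`: the set of (ground) atoms `A` not true in `I` for
which there are a clause of `P` and a ground substitution `θ` yielding a ground
instance with head `A` all of whose body literals are true in `I` or belong to
`Tr`. -/
def TrueOp (Pr : NormalProgram F P) (I : Interp F P) (Tr : Set (FOAtom F P)) :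
    Set (FOAtom F P) :=
  {A | A ∉ I.tr ∧ ∃ Cg ∈ instancesOf Pr, Cg.head = A ∧ ∀ L ∈ Cg.body, litTrueIn I Tr L}

/-- The operator `False^P_I(Fa)`: the set of ground atoms `A` not false in `I` such
that every ground instance of a clause of `P` with head `A` has a body literal
false in `I` or belonging to `Fa`. -/
def FalseOp (Pr : NormalProgram F P) (I : Interp F P) (Fa : Set (FOAtom F P)) :
    Set (FOAtom F P) :=
  {A | A ∉ I.fa ∧ A.Ground ∧
    ∀ Cg ∈ instancesOf Pr, Cg.head = A → ∃ L ∈ Cg.body, litFalseIn I Fa L}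

/-- `T^P_I`: the least fixed point of `True^P_I` (starting from `∅`), presented via
Knaster–Tarski as the intersection of the prefixed points. -/
def Tset (Pr : NormalProgram F P) (I : Interp F P) : Set (FOAtom F P) :=
  ⋂₀ {S | TrueOp Pr I S ⊆ S}

/-- `F^P_I`: the greatest fixed point of `False^P_I` (starting from the Herbrand
base), presented via Knaster–Tarski as the union of the postfixed points. -/
def Fset (Pr : NormalProgram F P) (I : Interp F P) : Set (FOAtom F P) :=
  ⋃₀ {S | S ⊆ FalseOp Pr I S}

/-- The finite iterates of `True^P_I` starting from `∅`. -/
def TrueIter (Pr : NormalProgram F P) (I : Interp F P) : ℕ → Set (FOAtom F P)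
  | 0 => ∅
  | n + 1 => TrueOp Pr I (TrueIter Pr I n)

/-- The iterated fixed point: `WFM_0 = ⟨∅;∅⟩`,
`WFM_{α+1} = WFM_α ∪ ⟨T_{WFM_α}; F_{WFM_α}⟩`, with unions at limit ordinals. -/
noncomputable def WFMStage (Pr : NormalProgram F P) : Ordinal.{0} → Interp F P
  | o =>
    ⟨{A | ∃ o' : Ordinal.{0}, ∃ _ : o' < o,
        A ∈ (WFMStage Pr o').tr ∪ Tset Pr (WFMStage Pr o')},
     {A | ∃ o' : Ordinal.{0}, ∃ _ : o' < o,
        A ∈ (WFMStage Pr o').fa ∪ Fset Pr (WFMStage Pr o')}⟩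
  termination_by o => o

/-- The well-founded model `WFM(P)`, i.e. the limit of the iterated fixed point. -/
noncomputable def WFM (Pr : NormalProgram F P) : Interp F P :=
  ⟨{A | ∃ o : Ordinal.{0}, A ∈ (WFMStage Pr o).tr},
   {A | ∃ o : Ordinal.{0}, A ∈ (WFMStage Pr o).fa}⟩

end DistSem

namespace DistSem

variable {F P : Type}

/-! ### The bounded-term-size property for (possibly ground and infinite) programs

For the ground instantiation of a program — for example a world of an LPAD —
bounding the size of the grounding substitutions used by `True^P_I` amounts to
bounding the sizes of the ground clause instances used, which is how we state the
property here. -/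

/-- `Cg` is a ground clause instance used to produce an atom in `TrueOp Pr I Tr`. -/
def UsedInstance (Pr : NormalProgram F P) (I : Interp F P) (Tr : Set (FOAtom F P))
    (Cg : Clause F P) : Prop :=
  Cg ∈ instancesOf Pr ∧ Cg.Ground ∧ Cg.head ∉ I.tr ∧ ∀ L ∈ Cg.body, litTrueIn I Tr L

/-- The application `True^P_I(Tr)` has the bounded-term-size property with bound
`L`: every ground clause instance (equivalently, every grounding substitution)
used to produce an atom in `True^P_I(Tr)` has size less than `L`. -/
def BoundedAppSize (Pr : NormalProgram F P) (I : Interp F P) (Tr : Set (FOAtom F P))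
    (L : ℕ) : Prop :=
  ∀ Cg, UsedInstance Pr I Tr Cg → sizeOf Cg < L

/-- The program `Pr` has the bounded-term-size property: every application of
`True^P_I` used to construct `WFM(P)` is bounded with the same bound `L`.  (The
applications used are those with `I = WFM_α` for some stage `α` and `Tr` a set
arising in the iteration of the least fixed point of `True^P_I`; all such sets are
subsets of `T^P_I`.) -/
def BTSProg (Pr : NormalProgram F P) : Prop :=
  ∃ L : ℕ, ∀ (o : Ordinal.{0}) (Tr : Set (FOAtom F P)),
    Tr ⊆ Tset Pr (WFMStage Pr o) → BoundedAppSize Pr (WFMStage Pr o) Tr L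

end DistSem

namespace DistSem

/-! ### Logic Programs with Annotated Disjunctions and the distribution semantics -/

/-- A clause of a Logic Program with Annotated Disjunctions:
`H1:α1 ∨ … ∨ Hn:αn ← L1,…,Lm`. -/
structure LPADClause (F P : Type) : Type where
  head : List (FOAtom F P × ℝ)
  body : List (Lit F P)

namespace LPADClause

variable {F P : Type}

def subst (θ : ℕ → FOTerm F) (C : LPADClause F P) : LPADClause F P :=
  ⟨C.head.map fun h => (h.1.subst θ, h.2), C.body.map (Lit.subst θ)⟩

def Ground (C : LPADClause F P) : Prop :=
  (∀ h ∈ C.head, (h.1 : FOAtom F P).Ground) ∧ ∀ L ∈ C.body, L.Ground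

/-- `Cg` is a ground instance of the LPAD clause `C`. -/
def Instance (C Cg : LPADClause F P) : Prop :=
  Cg.Ground ∧ (Cg = C ∨ ∃ θ, Cg = C.subst θ)

/-- The sum of the head annotations of a clause. -/
noncomputable def annSum (C : LPADClause F P) : ℝ := (C.head.map Prod.snd).sum

/-- Well-formed annotations: each `αi ∈ [0,1]` and `Σ αi ≤ 1`. -/
def AnnOK (C : LPADClause F P) : Prop :=
  (∀ h ∈ C.head, 0 ≤ h.2 ∧ h.2 ≤ 1) ∧ annSum C ≤ 1

end LPADClause

/-- An LPAD: a finite set of annotated disjunctive clauses with well-formed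
annotations. -/
structure LPAD (F P : Type) : Type where
  clauses : Set (LPADClause F P)
  finite : clauses.Finite
  annOK : ∀ C ∈ clauses, C.AnnOK

variable {F P : Type}

/-- The ground instantiation of a set of LPAD clauses. -/
def lground (S : Set (LPADClause F P)) : Set (LPADClause F P) :=
  {Cg | ∃ C ∈ S, C.Instance Cg}

/-- An atomic choice `(Cθ, i)`: for the ground clause instance `Cθ`, head atom `i`
is chosen.  The index `i = |head(C)|` denotes the implicit extra atom `null`
(available only when the annotations sum to less than 1). -/
abbrev AtomicChoice (F P : Type) := LPADClause F P × ℕ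

/-- The atomic choice is a legitimate one for the ground instantiation of `S`. -/
def ValidChoice (S : Set (LPADClause F P)) (ac : AtomicChoice F P) : Prop :=
  ac.1 ∈ lground S ∧
    (ac.2 < ac.1.head.length ∨ (ac.2 = ac.1.head.length ∧ ac.1.annSum < 1))

/-- A set of atomic choices is consistent: at most one head is selected for each
ground clause instance. -/
def Consistent (κ : Set (AtomicChoice F P)) : Prop :=
  ∀ ac ∈ κ, ∀ ac' ∈ κ, ac.1 = ac'.1 → ac.2 = ac'.2

/-- A composite choice for (the ground instantiation of) `S`: a consistent set of
atomic choices. -/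
def Composite (S : Set (LPADClause F P)) (κ : Set (AtomicChoice F P)) : Prop :=
  (∀ ac ∈ κ, ValidChoice S ac) ∧ Consistent κ

/-- A selection: a composite choice containing an atomic choice for *every* ground
clause instance. -/
def Selection (S : Set (LPADClause F P)) (σ : Set (AtomicChoice F P)) : Prop :=
  Composite S σ ∧ ∀ Cg ∈ lground S, ∃ i, (Cg, i) ∈ σ

/-- The set of worlds of `S`; a world is identified with the selection that
determines it. -/
def Worlds (S : Set (LPADClause F P)) : Set (Set (AtomicChoice F P)) :=
  {σ | Selection S σ}

/-- The normal logic program determined by a selection: for each atomic choice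
selecting an actual head atom (not `null`), the corresponding non-disjunctive
ground clause. -/
def progOf (σ : Set (AtomicChoice F P)) : NormalProgram F P :=
  {C | ∃ ac ∈ σ, ∃ h : ac.2 < ac.1.head.length,
        C = ⟨(ac.1.head.get ⟨ac.2, h⟩).1, ac.1.body⟩}

/-- The ground atom `A` is true in the world `σ` (i.e. in the well-founded model of
its program). -/
def TrueInWorld (σ : Set (AtomicChoice F P)) (A : FOAtom F P) : Prop :=
  A ∈ (WFM (progOf σ)).tr

/-- `ω_κ`: the set of worlds whose selection extends `κ`. -/
def omegaC (S : Set (LPADClause F P)) (κ : Set (AtomicChoice F P)) :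
    Set (Set (AtomicChoice F P)) :=
  {σ ∈ Worlds S | κ ⊆ σ}

/-- `ω_K = ⋃_{κ ∈ K} ω_κ`. -/
def omegaK (S : Set (LPADClause F P)) (K : Set (Set (AtomicChoice F P))) :
    Set (Set (AtomicChoice F P)) :=
  ⋃ κ ∈ K, omegaC S κ

/-- `κ` is an explanation for the ground atom `A`: `A` is true in every world of
`ω_κ`. -/
def Explanation (S : Set (LPADClause F P)) (κ : Set (AtomicChoice F P))
    (A : FOAtom F P) : Prop :=
  Composite S κ ∧ ∀ σ ∈ omegaC S κ, TrueInWorld σ A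

/-- `K` is covering for `A`: every world in which `A` is true belongs to `ω_K`. -/
def CoveringFor (S : Set (LPADClause F P)) (K : Set (Set (AtomicChoice F P)))
    (A : FOAtom F P) : Prop :=
  ∀ σ ∈ Worlds S, TrueInWorld σ A → σ ∈ omegaK S K

/-- The LPAD `T` is sound: every world has a two-valued well-founded model. -/
def LPAD.Sound (T : LPAD F P) : Prop :=
  ∀ σ ∈ Worlds T.clauses, ∀ A : FOAtom F P, A.Ground →
    A ∈ (WFM (progOf σ)).tr ∨ A ∈ (WFM (progOf σ)).fa

/-- The ground LPAD given by the clause set `S` has the bounded-term-size property: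
every world of it does. -/
def BTSL (S : Set (LPADClause F P)) : Prop :=
  ∀ σ ∈ Worlds S, BTSProg (progOf σ)

/-- The LPAD `T` has the bounded-term-size property. -/
def LPAD.BTS (T : LPAD F P) : Prop := BTSL T.clauses

end DistSem

namespace DistSem

variable {F P : Type}

/-! ### The probability measure of the distribution semantics -/

/-- The probability of an atomic choice: the annotation of the selected head atom
(or `1 - Σ αi` for the implicit `null` atom). -/
noncomputable def choiceProb (ac : AtomicChoice F P) : ℝ :=
  if h : ac.2 < ac.1.head.length then (ac.1.head.get ⟨ac.2, h⟩).2
  else 1 - ac.1.annSum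

/-- The probability `P(κ)` of a (finite) composite choice: the product of the
probabilities of its atomic choices. -/
noncomputable def compProb (κ : Set (AtomicChoice F P)) : ℝ :=
  ∏ᶠ ac ∈ κ, choiceProb ac

/-- Two composite choices are incompatible: their union is inconsistent, i.e. they
select different heads for some common ground clause instance. -/
def Incompatible (κ₁ κ₂ : Set (AtomicChoice F P)) : Prop :=
  ∃ (Cg : LPADClause F P) (i j : ℕ), (Cg, i) ∈ κ₁ ∧ (Cg, j) ∈ κ₂ ∧ i ≠ j

/-- A set of composite choices is mutually incompatible. -/
def MutuallyIncompatible (K : Set (Set (AtomicChoice F P))) : Prop :=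
  ∀ κ₁ ∈ K, ∀ κ₂ ∈ K, κ₁ ≠ κ₂ → Incompatible κ₁ κ₂

/-- The algebra `Ω_T`: the sets of worlds identified by finite sets of finite
composite choices. -/
def OmegaAlg (S : Set (LPADClause F P)) : Set (Set (Set (AtomicChoice F P))) :=
  {W | ∃ K, K.Finite ∧ (∀ κ ∈ K, κ.Finite ∧ Composite S κ) ∧ W = omegaK S K}

/-- The probability measure `μ : Ω_T → ℝ`, defined — using Poole's results that a
finite mutually incompatible set of finite composite choices describing the same
set of worlds always exists and that any two such sets give equal sums — by
`μ(ω_K) = Σ_{κ ∈ K'} P(κ)` for such a `K'`. -/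
noncomputable def mu (S : Set (LPADClause F P))
    (W : Set (Set (AtomicChoice F P))) : ℝ := by
  classical
  exact if h : ∃ K, K.Finite ∧ (∀ κ ∈ K, κ.Finite ∧ Composite S κ) ∧
      MutuallyIncompatible K ∧ omegaK S K = W
    then ∑ᶠ κ ∈ h.choose, compProb κ
    else 0

end DistSem

namespace DistSem

section AlgebraAux

variable {F P : Type} {S : Set (LPADClause F P)}

lemma consistent_subset {κ σ : Set (AtomicChoice F P)} (h : Consistent σ)
    (hsub : κ ⊆ σ) : Consistent κ :=
  fun ac hac ac' hac' => h ac (hsub hac) ac' (hsub hac')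

lemma worlds_mem_omegaAlg : Worlds S ∈ OmegaAlg S := by
  refine ⟨{∅}, Set.finite_singleton _, ?_, ?_⟩
  · rintro κ rfl
    exact ⟨Set.finite_empty, fun ac h => absurd h (Set.notMem_empty ac),
      fun ac h => absurd h (Set.notMem_empty ac)⟩
  · ext σ
    simp only [omegaK, Set.mem_singleton_iff, Set.iUnion_iUnion_eq_left, omegaC,
      Set.mem_setOf_eq, Set.empty_subset, and_true]

lemma union_mem_omegaAlg {W₁ W₂ : Set (Set (AtomicChoice F P))}
    (h₁ : W₁ ∈ OmegaAlg S) (h₂ : W₂ ∈ OmegaAlg S) : W₁ ∪ W₂ ∈ OmegaAlg S := by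
  obtain ⟨K₁, hK₁f, hK₁c, rfl⟩ := h₁
  obtain ⟨K₂, hK₂f, hK₂c, rfl⟩ := h₂
  refine ⟨K₁ ∪ K₂, hK₁f.union hK₂f, ?_, ?_⟩
  · rintro κ (h | h)
    exacts [hK₁c κ h, hK₂c κ h]
  · simp only [omegaK]
    exact (Set.biUnion_union K₁ K₂ _).symm

lemma inter_mem_omegaAlg {W₁ W₂ : Set (Set (AtomicChoice F P))}
    (h₁ : W₁ ∈ OmegaAlg S) (h₂ : W₂ ∈ OmegaAlg S) : W₁ ∩ W₂ ∈ OmegaAlg S := by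
  obtain ⟨K₁, hK₁f, hK₁c, rfl⟩ := h₁
  obtain ⟨K₂, hK₂f, hK₂c, rfl⟩ := h₂
  classical
  refine ⟨(fun p : Set (AtomicChoice F P) × Set (AtomicChoice F P) => p.1 ∪ p.2) ''
      {p ∈ K₁ ×ˢ K₂ | Consistent (p.1 ∪ p.2)}, ?_, ?_, ?_⟩
  · exact (((hK₁f.prod hK₂f).subset (Set.sep_subset _ _)).image _)
  · rintro κ ⟨⟨κ₁, κ₂⟩, ⟨⟨hκ₁, hκ₂⟩, hcons⟩, rfl⟩
    refine ⟨(hK₁c κ₁ hκ₁).1.union (hK₂c κ₂ hκ₂).1, ?_, hcons⟩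
    rintro ac (h | h)
    exacts [(hK₁c κ₁ hκ₁).2.1 ac h, (hK₂c κ₂ hκ₂).2.1 ac h]
  · ext σ
    constructor
    · rintro ⟨h1, h2⟩
      simp only [omegaK, Set.mem_iUnion, omegaC, Set.mem_setOf_eq] at h1 h2
      obtain ⟨κ₁, hκ₁, hσW, hsub₁⟩ := h1
      obtain ⟨κ₂, hκ₂, -, hsub₂⟩ := h2
      have hmem : κ₁ ∪ κ₂ ∈ (fun p : Set (AtomicChoice F P) × Set (AtomicChoice F P) =>
          p.1 ∪ p.2) '' {p ∈ K₁ ×ˢ K₂ | Consistent (p.1 ∪ p.2)} :=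
        ⟨(κ₁, κ₂), ⟨⟨hκ₁, hκ₂⟩,
          consistent_subset hσW.1.2 (Set.union_subset hsub₁ hsub₂)⟩, rfl⟩
      exact Set.mem_biUnion hmem
        (⟨hσW, Set.union_subset hsub₁ hsub₂⟩ : σ ∈ omegaC S (κ₁ ∪ κ₂))
    · intro h
      simp only [omegaK, Set.mem_iUnion, omegaC, Set.mem_setOf_eq] at h
      obtain ⟨κ', hκ', hσW, hsub⟩ := h
      obtain ⟨⟨κ₁, κ₂⟩, hp, rfl⟩ := (Set.mem_image _ _ _).mp hκ'
      have hps := (Set.mem_sep_iff.mp hp).1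
      have hκ₁ : κ₁ ∈ K₁ := (Set.mem_prod.mp hps).1
      have hκ₂ : κ₂ ∈ K₂ := (Set.mem_prod.mp hps).2
      exact ⟨Set.mem_biUnion hκ₁ ⟨hσW, (Set.union_subset_iff.mp hsub).1⟩,
        Set.mem_biUnion hκ₂ ⟨hσW, (Set.union_subset_iff.mp hsub).2⟩⟩

/-- Complement of a single `ω_κ` for a finite composite choice `κ`. -/
lemma compl_omegaC_mem {κ : Set (AtomicChoice F P)} (hfin : κ.Finite)
    (hcomp : Composite S κ) : Worlds S \ omegaC S κ ∈ OmegaAlg S := by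
  classical
  set K' : Set (Set (AtomicChoice F P)) :=
    ⋃ ac ∈ κ, (fun j => ({(ac.1, j)} : Set (AtomicChoice F P))) ''
      {j | j ≠ ac.2 ∧ ValidChoice S (ac.1, j)} with hK'
  have hjfin : ∀ ac : AtomicChoice F P,
      ({j | j ≠ ac.2 ∧ ValidChoice S (ac.1, j)} : Set ℕ).Finite := by
    intro ac
    refine (Set.finite_Iic ac.1.head.length).subset ?_
    rintro j ⟨-, -, (h | ⟨h, -⟩)⟩
    · exact le_of_lt h
    · exact le_of_eq h
  refine ⟨K', hfin.biUnion fun ac _ => ((hjfin ac).image _), ?_, ?_⟩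
  · rintro κ' hκ'
    simp only [hK', Set.mem_iUnion, Set.mem_image, Set.mem_setOf_eq] at hκ'
    obtain ⟨ac, hac, j, ⟨hne, hvalid⟩, rfl⟩ := hκ'
    refine ⟨Set.finite_singleton _, ?_, ?_⟩
    · rintro ac' rfl; exact hvalid
    · rintro a rfl a' rfl _; rfl
  · ext σ
    constructor
    · rintro ⟨hσW, hnot⟩
      have : ¬ κ ⊆ σ := fun h => hnot ⟨hσW, h⟩
      obtain ⟨ac, hac, hacσ⟩ := Set.not_subset.mp this
      obtain ⟨j, hj⟩ := hσW.2 ac.1 (hcomp.1 ac hac).1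
      have hjne : j ≠ ac.2 := by
        rintro rfl
        exact hacσ (by simpa using hj)
      have hvalid : ValidChoice S (ac.1, j) := hσW.1.1 _ hj
      have hmemK : ({(ac.1, j)} : Set (AtomicChoice F P)) ∈ K' := by
        simp only [hK', Set.mem_iUnion, Set.mem_image, Set.mem_setOf_eq]
        exact ⟨ac, hac, j, ⟨hjne, hvalid⟩, rfl⟩
      have hmemω : σ ∈ omegaC S {(ac.1, j)} := ⟨hσW, by rintro a rfl; exact hj⟩
      exact Set.mem_biUnion hmemK hmemω
    · intro h
      simp only [omegaK, Set.mem_iUnion, omegaC, Set.mem_setOf_eq] at h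
      obtain ⟨κ', hκ', hσW, hsub⟩ := h
      simp only [hK', Set.mem_iUnion, Set.mem_image, Set.mem_setOf_eq] at hκ'
      obtain ⟨ac, hac, j, ⟨hjne, -⟩, rfl⟩ := hκ'
      refine ⟨hσW, ?_⟩
      rintro ⟨-, hκσ⟩
      have h1 : (ac.1, j) ∈ σ := hsub rfl
      have h2 : (ac.1, ac.2) ∈ σ := by simpa using hκσ hac
      exact hjne (hσW.1.2 _ h1 _ h2 rfl)

lemma compl_mem_omegaAlg {W : Set (Set (AtomicChoice F P))}
    (h : W ∈ OmegaAlg S) : Worlds S \ W ∈ OmegaAlg S := by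
  obtain ⟨K, hKf, hKc, rfl⟩ := h
  refine Set.Finite.induction_on
    (motive := fun K _ => (∀ κ ∈ K, κ.Finite ∧ Composite S κ) →
      Worlds S \ omegaK S K ∈ OmegaAlg S) K hKf ?_ ?_ hKc
  · intro _
    simpa [omegaK] using (worlds_mem_omegaAlg (S := S))
  · intro κ K hκK hKfin ih hKc'
    have hrw : omegaK S (insert κ K) = omegaC S κ ∪ omegaK S K := by
      simp [omegaK, Set.biUnion_insert]
    rw [hrw, ← Set.diff_inter_diff]
    exact inter_mem_omegaAlg
      (compl_omegaC_mem (hKc' κ (Set.mem_insert _ _)).1 (hKc' κ (Set.mem_insert _ _)).2)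
      (ih fun κ' hκ' => hKc' κ' (Set.mem_insert_of_mem _ hκ'))

end AlgebraAux

/-- For an LPAD `T`, the collection
`Ω_T = {ω_K : K a finite set of finite composite choices}` is an algebra of
subsets of the set `W_T` of worlds of `T`: it contains `W_T` itself, and it is
closed under complementation (relative to `W_T`) and under finite unions, hence
also under finite intersections. -/
theorem omegaAlg_is_algebra {F P : Type} (T : LPAD F P) :
    Worlds T.clauses ∈ OmegaAlg T.clauses ∧
    (∀ W ∈ OmegaAlg T.clauses, Worlds T.clauses \ W ∈ OmegaAlg T.clauses) ∧
    (∀ W₁ ∈ OmegaAlg T.clauses, ∀ W₂ ∈ OmegaAlg T.clauses,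
      W₁ ∪ W₂ ∈ OmegaAlg T.clauses) ∧
    (∀ W₁ ∈ OmegaAlg T.clauses, ∀ W₂ ∈ OmegaAlg T.clauses,
      W₁ ∩ W₂ ∈ OmegaAlg T.clauses) :=
  ⟨worlds_mem_omegaAlg,
   fun _ h => compl_mem_omegaAlg h,
   fun _ h₁ _ h₂ => union_mem_omegaAlg h₁ h₂,
   fun _ h₁ _ h₂ => inter_mem_omegaAlg h₁ h₂⟩

end DistSem
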